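/- Let t₁, t₂, t₃ > 0 satisfy the strict triangle inequalities 2·max(t₁,t₂,t₃) < t₁ + t₂ + t₃, and let w₁, w₂ > 0. Then there exists exactly one quadruple (x₁,x₂,x₃,h) ∈ ℝ⁴ with h > 0 satisfying the system: t₁(h²−x₁²)/(h²+x₁²) + t₂(h²−x₂²)/(h²+x₂²) + t₃(h²−x₃²)/(h²+x₃²) = 0, t₁x₁/(h²+x₁²) + t₂x₂/(h²+x₂²) + t₃x₃/(h²+x₃²) = 0, −x₁(3h²+x₁²) + x₃(3h²+x₃²) = w₁, and x₂(3h²+x₂²) − x₃(3h²+x₃²) = w₂. -/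

import Mathlib

open Real Set Filter

lemma cos_half_pos {θ : ℝ} (h : θ ∈ Ioo (-π) π) : 0 < Real.cos (θ/2) := by
  apply Real.cos_pos_of_mem_Ioo
  constructor
  · linarith [h.1]
  · linarith [h.2]

lemma cos_in_tan {θ : ℝ} (hθ : θ ∈ Ioo (-π) π) :
    Real.cos θ = (1 - Real.tan (θ/2)^2) / (1 + Real.tan (θ/2)^2) := by
  have hc := cos_half_pos hθ
  have h2 : Real.cos θ = 2 * Real.cos (θ/2)^2 - 1 := by
    rw [← Real.cos_two_mul]; congr 1; ring
  rw [Real.tan_eq_sin_div_cos, h2]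
  have hcne := hc.ne'
  field_simp
  linear_combination (2 * Real.cos (θ/2)^2) * Real.sin_sq_add_cos_sq (θ/2)

lemma sin_in_tan {θ : ℝ} (hθ : θ ∈ Ioo (-π) π) :
    Real.sin θ = 2 * Real.tan (θ/2) / (1 + Real.tan (θ/2)^2) := by
  have hc := cos_half_pos hθ
  have h2 : Real.sin θ = 2 * Real.sin (θ/2) * Real.cos (θ/2) := by
    rw [← Real.sin_two_mul]; congr 1; ring
  rw [Real.tan_eq_sin_div_cos, h2]
  have hcne := hc.ne'
  field_simp
  linear_combination Real.sin (θ/2) * Real.sin_sq_add_cos_sq (θ/2)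

lemma term1 {θ h : ℝ} (hθ : θ ∈ Ioo (-π) π) (hh : 0 < h) :
    (h^2 - (h * Real.tan (θ/2))^2) / (h^2 + (h * Real.tan (θ/2))^2) = Real.cos θ := by
  rw [cos_in_tan hθ]
  have h1 : (0:ℝ) < 1 + Real.tan (θ/2)^2 := by positivity
  have h2 : (0:ℝ) < h^2 + (h * Real.tan (θ/2))^2 := by positivity
  rw [div_eq_div_iff h2.ne' h1.ne']; ring

lemma term2 {θ h : ℝ} (hθ : θ ∈ Ioo (-π) π) (hh : 0 < h) :
    (h * Real.tan (θ/2)) / (h^2 + (h * Real.tan (θ/2))^2) = Real.sin θ / (2*h) := by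
  rw [sin_in_tan hθ]
  have h1 : (0:ℝ) < 1 + Real.tan (θ/2)^2 := by positivity
  have h2 : (0:ℝ) < h^2 + (h * Real.tan (θ/2))^2 := by positivity
  rw [div_div, div_eq_div_iff h2.ne' (by positivity)]; ring

lemma exists_angles (t₁ t₂ t₃ : ℝ) (ht₁ : 0 < t₁) (ht₂ : 0 < t₂) (ht₃ : 0 < t₃)
    (h12 : t₁ < t₂ + t₃) (h21 : t₂ < t₁ + t₃) (h31 : t₃ < t₁ + t₂) :
    ∃ β γ : ℝ, 0 < β ∧ β < π ∧ 0 < γ ∧ γ < π ∧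
      Real.cos β = (t₂^2 - t₁^2 - t₃^2) / (2*t₁*t₃) ∧
      Real.cos γ = (t₁^2 - t₂^2 - t₃^2) / (2*t₂*t₃) ∧
      t₁ + t₃ * Real.cos β + t₂ * Real.cos (β+γ) = 0 ∧
      t₃ * Real.sin β + t₂ * Real.sin (β+γ) = 0 := by
  have h13 : (0:ℝ) < 2*t₁*t₃ := by positivity
  have h23 : (0:ℝ) < 2*t₂*t₃ := by positivity
  set a : ℝ := (t₂^2 - t₁^2 - t₃^2) / (2*t₁*t₃) with ha
  set b : ℝ := (t₁^2 - t₂^2 - t₃^2) / (2*t₂*t₃) with hb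
  have ha1 : -1 < a := by rw [ha, lt_div_iff₀ h13]; nlinarith
  have ha2 : a < 1 := by rw [ha, div_lt_iff₀ h13]; nlinarith
  have hb1 : -1 < b := by rw [hb, lt_div_iff₀ h23]; nlinarith
  have hb2 : b < 1 := by rw [hb, div_lt_iff₀ h23]; nlinarith
  have hca := Real.cos_arccos ha1.le ha2.le
  have hcb := Real.cos_arccos hb1.le hb2.le
  set Δ : ℝ := 2*(t₁*t₂)^2 + 2*(t₂*t₃)^2 + 2*(t₁*t₃)^2 - t₁^4 - t₂^4 - t₃^4 with hΔdef
  have hΔfac : Δ = (t₁+t₂+t₃) * ((-t₁+t₂+t₃) * ((t₁-t₂+t₃) * (t₁+t₂-t₃))) := by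
    rw [hΔdef]; ring
  have hΔ : 0 ≤ Δ := by
    rw [hΔfac]
    exact le_of_lt (mul_pos (by linarith) (mul_pos (by linarith) (mul_pos (by linarith) (by linarith))))
  have hsa : Real.sin (Real.arccos a) = Real.sqrt Δ / (2*t₁*t₃) := by
    rw [Real.sin_arccos]
    rw [show 1 - a^2 = Δ / (2*t₁*t₃)^2 by rw [ha, hΔdef]; field_simp; ring]
    rw [Real.sqrt_div hΔ, Real.sqrt_sq h13.le]
  have hsb : Real.sin (Real.arccos b) = Real.sqrt Δ / (2*t₂*t₃) := by
    rw [Real.sin_arccos]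
    rw [show 1 - b^2 = Δ / (2*t₂*t₃)^2 by rw [hb, hΔdef]; field_simp; ring]
    rw [Real.sqrt_div hΔ, Real.sqrt_sq h23.le]
  have hmul : Real.sqrt Δ * Real.sqrt Δ = Δ := Real.mul_self_sqrt hΔ
  refine ⟨Real.arccos a, Real.arccos b, Real.arccos_pos.mpr ha2,
    lt_of_le_of_ne (Real.arccos_le_pi a) (fun h => by
      have := Real.arccos_eq_pi.mp h; linarith),
    Real.arccos_pos.mpr hb2,
    lt_of_le_of_ne (Real.arccos_le_pi b) (fun h => by
      have := Real.arccos_eq_pi.mp h; linarith),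
    hca, hcb, ?_, ?_⟩
  · have hss : Real.sqrt Δ / (2*t₁*t₃) * (Real.sqrt Δ / (2*t₂*t₃)) = Δ / ((2*t₁*t₃)*(2*t₂*t₃)) := by
      rw [div_mul_div_comm, hmul]
    rw [Real.cos_add, hca, hcb, hsa, hsb, hss, hΔdef, ha, hb]
    field_simp
    ring
  · rw [Real.sin_add, hca, hcb, hsa, hsb, ha, hb]
    field_simp
    ring

noncomputable def fV (θ : ℝ) : ℝ := Real.tan (θ/2) ^ 3 + 3 * Real.tan (θ/2)
lemma fV_tendsto_atTop : Tendsto fV (nhdsWithin π (Iio π)) atTop := by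
  have h1 : Tendsto (fun θ : ℝ => θ/2) (nhdsWithin π (Iio π)) (nhdsWithin (π/2) (Iio (π/2))) := by
    apply tendsto_nhdsWithin_of_tendsto_nhds_of_eventually_within
    · exact ((continuous_id.div_const 2).tendsto π).mono_left nhdsWithin_le_nhds
    · filter_upwards [self_mem_nhdsWithin] with x hx
      simp only [mem_Iio] at *; linarith
  have h2 : Tendsto (fun θ : ℝ => Real.tan (θ/2)) (nhdsWithin π (Iio π)) atTop :=
    Real.tendsto_tan_pi_div_two.comp h1
  have h3 : Tendsto (fun u : ℝ => u^3 + 3*u) atTop atTop := by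
    apply tendsto_atTop_mono' atTop _ tendsto_id
    filter_upwards [eventually_ge_atTop (0:ℝ)] with u hu
    simp only [id]; nlinarith [pow_nonneg hu 3]
  exact h3.comp h2

lemma fV_tendsto_atBot : Tendsto fV (nhdsWithin (-π) (Ioi (-π))) atBot := by
  have h1 : Tendsto (fun θ : ℝ => θ/2) (nhdsWithin (-π) (Ioi (-π)))
      (nhdsWithin (-(π/2)) (Ioi (-(π/2)))) := by
    apply tendsto_nhdsWithin_of_tendsto_nhds_of_eventually_within
    · rw [show -(π/2) = (-π)/2 by ring]
      exact ((continuous_id.div_const 2).tendsto (-π)).mono_left nhdsWithin_le_nhds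
    · filter_upwards [self_mem_nhdsWithin] with x hx
      simp only [mem_Ioi] at *; linarith
  have h2 : Tendsto (fun θ : ℝ => Real.tan (θ/2)) (nhdsWithin (-π) (Ioi (-π))) atBot :=
    Real.tendsto_tan_neg_pi_div_two.comp h1
  have h3 : Tendsto (fun u : ℝ => u^3 + 3*u) atBot atBot := by
    apply tendsto_atBot_mono' atBot _ tendsto_id
    filter_upwards [eventually_le_atBot (0:ℝ)] with u hu
    simp only [id]
    nlinarith [mul_nonneg (mul_nonneg (neg_nonneg.mpr hu) (neg_nonneg.mpr hu)) (neg_nonneg.mpr hu)]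
  exact h3.comp h2
noncomputable def fD (θ : ℝ) : ℝ := (3/2) * (1 + Real.tan (θ/2) ^ 2) ^ 2

lemma cubic_strictMono : StrictMono (fun u : ℝ => u ^ 3 + 3 * u) := by
  intro a b hab
  dsimp only
  nlinarith [sq_nonneg (a + b), sq_nonneg a, sq_nonneg b, sq_nonneg (a - b)]

lemma one_add_tan_sq_half {θ : ℝ} (h : θ ∈ Ioo (-π) π) :
    1 + Real.tan (θ/2) ^ 2 = 1 / Real.cos (θ/2) ^ 2 := by
  have hc := (cos_half_pos h).ne'
  rw [Real.tan_eq_sin_div_cos]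
  field_simp
  linear_combination Real.sin_sq_add_cos_sq (θ/2)

lemma hasDerivAt_tan_half {θ : ℝ} (h : θ ∈ Ioo (-π) π) :
    HasDerivAt (fun x => Real.tan (x/2)) ((1 + Real.tan (θ/2) ^ 2) / 2) θ := by
  have hc := (cos_half_pos h).ne'
  have h1 : HasDerivAt (fun x : ℝ => x / 2) (1/2) θ := (hasDerivAt_id θ).div_const 2
  have h2 := (Real.hasDerivAt_tan hc).comp θ h1
  refine h2.congr_deriv ?_
  rw [one_add_tan_sq_half h]; ring

lemma hasDerivAt_fV {θ : ℝ} (h : θ ∈ Ioo (-π) π) : HasDerivAt fV (fD θ) θ := by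
  have h1 := hasDerivAt_tan_half h
  have h2 : HasDerivAt (fun u : ℝ => u ^ 3 + 3 * u) (3 * Real.tan (θ/2) ^ 2 + 3) (Real.tan (θ/2)) := by
    have := ((hasDerivAt_pow 3 (Real.tan (θ/2))).add ((hasDerivAt_id _).const_mul 3))
    refine this.congr_deriv ?_; ring
  have := h2.comp θ h1
  refine this.congr_deriv ?_
  unfold fD; ring

lemma hasDerivAt_fD {θ : ℝ} (h : θ ∈ Ioo (-π) π) :
    HasDerivAt fD (2 * Real.tan (θ/2) * fD θ) θ := by
  have h1 := hasDerivAt_tan_half h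
  have h2 : HasDerivAt (fun u : ℝ => (3/2) * (1 + u ^ 2) ^ 2)
      ((3/2) * (2 * (1 + Real.tan (θ/2) ^ 2) * (2 * Real.tan (θ/2)))) (Real.tan (θ/2)) := by
    have hu : HasDerivAt (fun u : ℝ => 1 + u ^ 2) (2 * Real.tan (θ/2)) (Real.tan (θ/2)) := by
      have := (hasDerivAt_pow 2 (Real.tan (θ/2))).const_add 1
      refine this.congr_deriv ?_; ring
    have := (hu.pow 2).const_mul (3/2 : ℝ)
    refine this.congr_deriv ?_; ring
  have := h2.comp θ h1
  refine this.congr_deriv ?_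
  unfold fD; ring

lemma fD_pos (θ : ℝ) : 0 < fD θ := by unfold fD; positivity

lemma fV_strictMonoOn : StrictMonoOn fV (Ioo (-π) π) := by
  intro a ha b hb hab
  have h1 : Real.tan (a/2) < Real.tan (b/2) := by
    apply Real.strictMonoOn_tan _ _ (by linarith)
    · exact ⟨by linarith [ha.1], by linarith [ha.2]⟩
    · exact ⟨by linarith [hb.1], by linarith [hb.2]⟩
  exact cubic_strictMono h1

lemma key_ineq {a b c : ℝ} (ha : -π < a) (h1 : a < b) (h2 : b < c) (hc : c < π) :
    (fD b - fD a) * (fV c - fV b) < (fD c - fD b) * (fV b - fV a) := by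
  have hsub : ∀ x y : ℝ, -π < x → x < y → y < π →
      ∃ ξ ∈ Ioo x y, (fD y - fD x) = (fV y - fV x) * (2 * Real.tan (ξ/2)) := by
    intro x y hx hxy hy
    have hmem : ∀ z ∈ Icc x y, z ∈ Ioo (-π) π := fun z hz => ⟨by linarith [hz.1], by linarith [hz.2]⟩
    have hmem' : ∀ z ∈ Ioo x y, z ∈ Ioo (-π) π := fun z hz => hmem z ⟨hz.1.le, hz.2.le⟩
    obtain ⟨ξ, hξ, heq⟩ := exists_ratio_deriv_eq_ratio_slope fV hxy
      (fun z hz => (hasDerivAt_fV (hmem z hz)).continuousAt.continuousWithinAt)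
      (fun z hz => (hasDerivAt_fV (hmem' z hz)).differentiableAt.differentiableWithinAt)
      fD
      (fun z hz => (hasDerivAt_fD (hmem z hz)).continuousAt.continuousWithinAt)
      (fun z hz => (hasDerivAt_fD (hmem' z hz)).differentiableAt.differentiableWithinAt)
    refine ⟨ξ, hξ, ?_⟩
    rw [(hasDerivAt_fV (hmem' ξ hξ)).deriv, (hasDerivAt_fD (hmem' ξ hξ)).deriv] at heq
    have hpos := (fD_pos ξ).ne'
    have h3 : (fD y - fD x) * fD ξ = ((fV y - fV x) * (2 * Real.tan (ξ/2))) * fD ξ := by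
      linear_combination heq
    exact mul_right_cancel₀ hpos h3
  obtain ⟨ξ₁, hξ₁, e₁⟩ := hsub a b ha h1 (by linarith)
  obtain ⟨ξ₂, hξ₂, e₂⟩ := hsub b c (by linarith) h2 hc
  have htan : Real.tan (ξ₁/2) < Real.tan (ξ₂/2) := by
    apply Real.strictMonoOn_tan
    · exact ⟨by linarith [hξ₁.1], by linarith [hξ₁.2, h2, hc]⟩
    · exact ⟨by linarith [hξ₂.1, ha, h1], by linarith [hξ₂.2]⟩
    · linarith [hξ₁.2, hξ₂.1]
  have hba : 0 < fV b - fV a := by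
    have := fV_strictMonoOn ⟨ha, by linarith⟩ ⟨by linarith, by linarith⟩ h1; linarith
  have hcb : 0 < fV c - fV b := by
    have := fV_strictMonoOn ⟨by linarith, by linarith⟩ ⟨by linarith, hc⟩ h2; linarith
  rw [e₁, e₂]
  nlinarith [mul_pos hba hcb]

lemma core (β γ w₁ w₂ : ℝ) (hβ0 : 0 < β) (hβπ : β < π) (hγ0 : 0 < γ) (hγπ : γ < π)
    (hw₁ : 0 < w₁) (hw₂ : 0 < w₂) :
    ∃! q : ℝ × ℝ, q.1 ∈ Ioo (-π) (π - β - γ) ∧ 0 < q.2 ∧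
      q.2^3 * (fV (q.1+β) - fV q.1) = w₁ ∧
      q.2^3 * (fV (q.1+β+γ) - fV (q.1+β)) = w₂ := by
  have hπ := Real.pi_pos
  set L : ℝ := π - β - γ with hLdef
  have hL : -π < L := by rw [hLdef]; linarith
  have mem1 : ∀ φ ∈ Ioo (-π) L, φ ∈ Ioo (-π) π := fun φ hφ => ⟨hφ.1, by have := hφ.2; rw [hLdef] at this; linarith⟩
  have mem2 : ∀ φ ∈ Ioo (-π) L, φ + β ∈ Ioo (-π) π := fun φ hφ => ⟨by linarith [hφ.1], by have := hφ.2; rw [hLdef] at this; linarith⟩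
  have mem3 : ∀ φ ∈ Ioo (-π) L, φ + β + γ ∈ Ioo (-π) π := fun φ hφ => ⟨by linarith [hφ.1], by have := hφ.2; rw [hLdef] at this; linarith⟩
  have Fpos : ∀ φ ∈ Ioo (-π) L, 0 < fV (φ+β) - fV φ := by
    intro φ hφ
    have := fV_strictMonoOn (mem1 φ hφ) (mem2 φ hφ) (by linarith)
    linarith
  have Gpos : ∀ φ ∈ Ioo (-π) L, 0 < fV (φ+β+γ) - fV (φ+β) := by
    intro φ hφ
    have := fV_strictMonoOn (mem2 φ hφ) (mem3 φ hφ) (by linarith)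
    linarith
  have hFd : ∀ φ ∈ Ioo (-π) L, HasDerivAt (fun ψ => fV (ψ+β) - fV ψ) (fD (φ+β) - fD φ) φ := by
    intro φ hφ
    have A : HasDerivAt (fun x : ℝ => fV (x+β)) (fD (φ+β)) φ := by
      exact ((hasDerivAt_fV (mem2 φ hφ)).comp φ ((hasDerivAt_id φ).add_const β)).congr_deriv (mul_one _)
    exact A.sub (hasDerivAt_fV (mem1 φ hφ))
  have hGd : ∀ φ ∈ Ioo (-π) L, HasDerivAt (fun ψ => fV (ψ+β+γ) - fV (ψ+β))
      (fD (φ+β+γ) - fD (φ+β)) φ := by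
    intro φ hφ
    have A : HasDerivAt (fun x : ℝ => fV (x+β)) (fD (φ+β)) φ := by
      exact ((hasDerivAt_fV (mem2 φ hφ)).comp φ ((hasDerivAt_id φ).add_const β)).congr_deriv (mul_one _)
    have B : HasDerivAt (fun x : ℝ => fV (x+β+γ)) (fD (φ+β+γ)) φ := by
      have hm : φ + (β+γ) ∈ Ioo (-π) π := by
        have := mem3 φ hφ; rwa [add_assoc] at this
      have := (hasDerivAt_fV hm).comp φ ((hasDerivAt_id φ).add_const (β+γ))
      have h2 : fD (φ + (β + γ)) = fD (φ+β+γ) := by rw [← add_assoc]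
      rw [h2, mul_one] at this
      apply this.congr_of_eventuallyEq
      filter_upwards with x
      simp [Function.comp, add_assoc]
    exact B.sub A
  set r : ℝ → ℝ := fun φ => (fV (φ+β) - fV φ) / (fV (φ+β+γ) - fV (φ+β)) with hrdef
  have hrd : ∀ φ ∈ Ioo (-π) L, HasDerivAt r
      (((fD (φ+β) - fD φ) * (fV (φ+β+γ) - fV (φ+β)) -
        (fV (φ+β) - fV φ) * (fD (φ+β+γ) - fD (φ+β))) / (fV (φ+β+γ) - fV (φ+β))^2) φ := by
    intro φ hφ
    exact (hFd φ hφ).div (hGd φ hφ) (Gpos φ hφ).ne'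
  have hanti : StrictAntiOn r (Ioo (-π) L) := by
    apply strictAntiOn_of_deriv_neg (convex_Ioo _ _)
    · exact fun φ hφ => (hrd φ hφ).continuousAt.continuousWithinAt
    · intro φ hφ
      rw [interior_Ioo] at hφ
      rw [(hrd φ hφ).deriv]
      apply div_neg_of_neg_of_pos
      · have := key_ineq (mem1 φ hφ).1 (by linarith : φ < φ + β) (by linarith : φ + β < φ + β + γ)
          (mem3 φ hφ).2
        linarith
      · have := Gpos φ hφ
        positivity
  set H : ℝ → ℝ := fun φ => w₂ * (fV (φ+β) - fV φ) - w₁ * (fV (φ+β+γ) - fV (φ+β)) with hHdef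
  have hHcont : ∀ φ ∈ Ioo (-π) L, ContinuousAt H φ := by
    intro φ hφ
    exact (((hFd φ hφ).const_mul w₂).sub ((hGd φ hφ).const_mul w₁)).continuousAt
  -- tendsto atTop near -π
  have hm2 : (-π) + β ∈ Ioo (-π) π := ⟨by linarith, by linarith⟩
  have hm3 : (-π) + β + γ ∈ Ioo (-π) π := ⟨by linarith, by linarith⟩
  have tr2 : Tendsto (fun φ : ℝ => fV (φ+β)) (nhdsWithin (-π) (Ioi (-π))) (nhds (fV ((-π)+β))) := by
    have h1 : Tendsto (fun φ : ℝ => φ + β) (nhds (-π)) (nhds ((-π)+β)) :=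
      (by fun_prop : Continuous fun x : ℝ => x + β).tendsto (-π)
    exact ((hasDerivAt_fV hm2).continuousAt.tendsto.comp h1).mono_left nhdsWithin_le_nhds
  have tr3 : Tendsto (fun φ : ℝ => fV (φ+β+γ)) (nhdsWithin (-π) (Ioi (-π))) (nhds (fV ((-π)+β+γ))) := by
    have h1 : Tendsto (fun φ : ℝ => φ + β + γ) (nhds (-π)) (nhds ((-π)+β+γ)) :=
      (by fun_prop : Continuous fun x : ℝ => x + β + γ).tendsto (-π)
    exact ((hasDerivAt_fV hm3).continuousAt.tendsto.comp h1).mono_left nhdsWithin_le_nhds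
  have hTop : Tendsto H (nhdsWithin (-π) (Ioi (-π))) atTop := by
    have hneg : Tendsto (fun φ : ℝ => w₂ * (-(fV φ))) (nhdsWithin (-π) (Ioi (-π))) atTop := by
      apply Tendsto.const_mul_atTop hw₂
      exact tendsto_neg_atTop_iff.mpr fV_tendsto_atBot
    have hC : Tendsto (fun φ : ℝ => w₂ * fV (φ+β) - w₁ * (fV (φ+β+γ) - fV (φ+β)))
        (nhdsWithin (-π) (Ioi (-π)))
        (nhds (w₂ * fV ((-π)+β) - w₁ * (fV ((-π)+β+γ) - fV ((-π)+β)))) :=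
      (tr2.const_mul w₂).sub ((tr3.sub tr2).const_mul w₁)
    have := hneg.atTop_add hC
    apply this.congr
    intro φ; rw [hHdef]; ring
  -- tendsto atBot near L
  have hq1 : L ∈ Ioo (-π) π := ⟨hL, by rw [hLdef]; linarith⟩
  have hq2 : L + β ∈ Ioo (-π) π := ⟨by linarith, by rw [hLdef]; linarith⟩
  have sr1 : Tendsto (fun φ : ℝ => fV φ) (nhdsWithin L (Iio L)) (nhds (fV L)) :=
    (hasDerivAt_fV hq1).continuousAt.tendsto.mono_left nhdsWithin_le_nhds
  have sr2 : Tendsto (fun φ : ℝ => fV (φ+β)) (nhdsWithin L (Iio L)) (nhds (fV (L+β))) := by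
    have h1 : Tendsto (fun φ : ℝ => φ + β) (nhds L) (nhds (L+β)) :=
      (by fun_prop : Continuous fun x : ℝ => x + β).tendsto L
    exact ((hasDerivAt_fV hq2).continuousAt.tendsto.comp h1).mono_left nhdsWithin_le_nhds
  have hBot : Tendsto H (nhdsWithin L (Iio L)) atBot := by
    have h1 : Tendsto (fun φ : ℝ => φ + β + γ) (nhdsWithin L (Iio L)) (nhdsWithin π (Iio π)) := by
      apply tendsto_nhdsWithin_of_tendsto_nhds_of_eventually_within
      · have h2 : Tendsto (fun φ : ℝ => φ + β + γ) (nhds L) (nhds (L+β+γ)) :=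
          (by fun_prop : Continuous fun x : ℝ => x + β + γ).tendsto L
        have : L + β + γ = π := by rw [hLdef]; ring
        rw [this] at h2
        exact h2.mono_left nhdsWithin_le_nhds
      · filter_upwards [self_mem_nhdsWithin] with x hx
        have hxL : x < L := hx
        have hLL : L = π - β - γ := hLdef
        simp only [mem_Iio]
        linarith
    have h3 : Tendsto (fun φ : ℝ => fV (φ+β+γ)) (nhdsWithin L (Iio L)) atTop :=
      fV_tendsto_atTop.comp h1
    have hneg : Tendsto (fun φ : ℝ => w₁ * (-(fV (φ+β+γ)))) (nhdsWithin L (Iio L)) atBot := by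
      apply Tendsto.const_mul_atBot hw₁
      exact tendsto_neg_atBot_iff.mpr h3
    have hC : Tendsto (fun φ : ℝ => w₂ * (fV (φ+β) - fV φ) + w₁ * fV (φ+β))
        (nhdsWithin L (Iio L)) (nhds (w₂ * (fV (L+β) - fV L) + w₁ * fV (L+β))) :=
      ((sr2.sub sr1).const_mul w₂).add (sr2.const_mul w₁)
    have := hC.add_atBot hneg
    apply this.congr
    intro φ; rw [hHdef]; ring
  -- pick points
  obtain ⟨φb, hφbneg, hφbmem⟩ :=
    ((hBot.eventually (eventually_lt_atBot (0:ℝ))).and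
      (Filter.eventually_of_mem (Ioo_mem_nhdsLT_of_mem ⟨hL, le_refl L⟩) (fun x hx => hx))).exists
  obtain ⟨φa, hφapos, hφamem⟩ :=
    ((hTop.eventually (eventually_gt_atTop (0:ℝ))).and
      (Filter.eventually_of_mem (Ioo_mem_nhdsGT_of_mem ⟨le_refl (-π), hφbmem.1⟩)
        (fun x hx => hx))).exists
  have hab : φa < φb := hφamem.2
  have hIcc : Icc φa φb ⊆ Ioo (-π) L :=
    fun x hx => ⟨lt_of_lt_of_le hφamem.1 hx.1, lt_of_le_of_lt hx.2 hφbmem.2⟩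
  have hHconts : ContinuousOn H (Icc φa φb) :=
    fun x hx => (hHcont x (hIcc hx)).continuousWithinAt
  obtain ⟨φ₀, hφ₀mem', hφ₀⟩ := intermediate_value_Icc' hab.le hHconts
    ⟨hφbneg.le, hφapos.le⟩
  have hφ₀mem : φ₀ ∈ Ioo (-π) L := hIcc hφ₀mem'
  -- construct h₀
  have hF₀ := Fpos φ₀ hφ₀mem
  have hG₀ := Gpos φ₀ hφ₀mem
  have hx₀ : (0:ℝ) < w₁ / (fV (φ₀+β) - fV φ₀) := div_pos hw₁ hF₀
  set h₀ : ℝ := (w₁ / (fV (φ₀+β) - fV φ₀)) ^ ((1:ℝ)/3) with hh₀def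
  have hh₀pos : 0 < h₀ := Real.rpow_pos_of_pos hx₀ _
  have hcube : h₀ ^ 3 = w₁ / (fV (φ₀+β) - fV φ₀) := by
    rw [hh₀def, ← Real.rpow_natCast (_ ^ ((1:ℝ)/3)) 3, ← Real.rpow_mul hx₀.le]
    norm_num
  have hHφ₀ : w₂ * (fV (φ₀+β) - fV φ₀) - w₁ * (fV (φ₀+β+γ) - fV (φ₀+β)) = 0 := hφ₀
  have hE₁ : h₀ ^ 3 * (fV (φ₀+β) - fV φ₀) = w₁ := by
    rw [hcube]; field_simp
  have hE₂ : h₀ ^ 3 * (fV (φ₀+β+γ) - fV (φ₀+β)) = w₂ := by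
    rw [hcube, div_mul_eq_mul_div, div_eq_iff hF₀.ne']
    nlinarith [hHφ₀]
  refine ⟨⟨φ₀, h₀⟩, ⟨hφ₀mem, hh₀pos, hE₁, hE₂⟩, ?_⟩
  rintro ⟨φ, h⟩ ⟨hmem, hh, he₁, he₂⟩
  simp only at hmem hh he₁ he₂
  have hh3 : (0:ℝ) < h ^ 3 := pow_pos hh 3
  have hHφ : H φ = 0 := by
    have hz : h ^ 3 * (w₂ * (fV (φ+β) - fV φ) - w₁ * (fV (φ+β+γ) - fV (φ+β))) = 0 := by
      linear_combination w₂ * he₁ - w₁ * he₂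
    rcases mul_eq_zero.mp hz with h' | h'
    · exact absurd h' hh3.ne'
    · exact h'
  have hrval : ∀ ψ ∈ Ioo (-π) L, H ψ = 0 → r ψ = w₁ / w₂ := by
    intro ψ hψ hψ0
    have hGψ := Gpos ψ hψ
    rw [hrdef]
    simp only
    rw [div_eq_div_iff hGψ.ne' hw₂.ne']
    have : w₂ * (fV (ψ+β) - fV ψ) - w₁ * (fV (ψ+β+γ) - fV (ψ+β)) = 0 := hψ0
    linarith
  have hφeq : φ = φ₀ := by
    apply hanti.injOn hmem hφ₀mem
    rw [hrval φ hmem hHφ, hrval φ₀ hφ₀mem hφ₀]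
  have hheq : h = h₀ := by
    have e1 : h ^ 3 * (fV (φ₀+β) - fV φ₀) = w₁ := by rw [← hφeq]; exact he₁
    have e2 : h ^ 3 = h₀ ^ 3 := by
      have := hE₁
      have h3 : h ^ 3 * (fV (φ₀+β) - fV φ₀) = h₀ ^ 3 * (fV (φ₀+β) - fV φ₀) := by
        rw [e1, hE₁]
      exact mul_right_cancel₀ hF₀.ne' h3
    rcases lt_trichotomy h h₀ with hlt | heq | hgt
    · exact absurd e2 (ne_of_lt (pow_lt_pow_left₀ hlt hh.le (by norm_num)))
    · exact heq
    · exact absurd e2.symm (ne_of_lt (pow_lt_pow_left₀ hgt hh₀pos.le (by norm_num)))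
  rw [Prod.ext_iff]
  exact ⟨hφeq, hheq⟩

set_option maxHeartbeats 1000000 in
lemma cos_rigid {δ β : ℝ} (hδ0 : 0 < δ) (hδ2 : δ < 2*π) (hβ : 0 < β) (hβπ : β < π)
    (h : Real.cos δ = Real.cos β) : δ = β ∨ δ = 2*π - β := by
  rcases le_or_gt δ π with hle | hgt
  · left; exact Real.injOn_cos ⟨hδ0.le, hle⟩ ⟨hβ.le, hβπ.le⟩ h
  · right
    have h2 : Real.cos (2*π - δ) = Real.cos β := by rw [Real.cos_two_pi_sub]; exact h
    have := Real.injOn_cos ⟨by linarith, by linarith⟩ ⟨hβ.le, hβπ.le⟩ h2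
    linarith

set_option maxHeartbeats 2000000 in
/-- For surface tensions satisfying the strict triangle inequalities and positive volumes,
there is exactly one quadruple `(x₁, x₂, x₃, h)` with `h > 0` satisfying the Young–Dupré
force balance together with the volume constraints. -/
theorem stmt_10 (t₁ t₂ t₃ w₁ w₂ : ℝ) (ht₁ : 0 < t₁) (ht₂ : 0 < t₂) (ht₃ : 0 < t₃)
    (htri : 2 * max (max t₁ t₂) t₃ < t₁ + t₂ + t₃) (hw₁ : 0 < w₁) (hw₂ : 0 < w₂) :
    ∃! p : ℝ × ℝ × ℝ × ℝ,
      0 < p.2.2.2 ∧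
      t₁ * (p.2.2.2 ^ 2 - p.1 ^ 2) / (p.2.2.2 ^ 2 + p.1 ^ 2) +
        t₂ * (p.2.2.2 ^ 2 - p.2.1 ^ 2) / (p.2.2.2 ^ 2 + p.2.1 ^ 2) +
        t₃ * (p.2.2.2 ^ 2 - p.2.2.1 ^ 2) / (p.2.2.2 ^ 2 + p.2.2.1 ^ 2) = 0 ∧
      t₁ * p.1 / (p.2.2.2 ^ 2 + p.1 ^ 2) + t₂ * p.2.1 / (p.2.2.2 ^ 2 + p.2.1 ^ 2) +
        t₃ * p.2.2.1 / (p.2.2.2 ^ 2 + p.2.2.1 ^ 2) = 0 ∧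
      -p.1 * (3 * p.2.2.2 ^ 2 + p.1 ^ 2) + p.2.2.1 * (3 * p.2.2.2 ^ 2 + p.2.2.1 ^ 2) = w₁ ∧
      p.2.1 * (3 * p.2.2.2 ^ 2 + p.2.1 ^ 2) - p.2.2.1 * (3 * p.2.2.2 ^ 2 + p.2.2.1 ^ 2) = w₂ := by
  have hπ := Real.pi_pos
  have hmax1 : t₁ ≤ max (max t₁ t₂) t₃ := le_trans (le_max_left t₁ t₂) (le_max_left _ _)
  have hmax2 : t₂ ≤ max (max t₁ t₂) t₃ := le_trans (le_max_right t₁ t₂) (le_max_left _ _)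
  have hmax3 : t₃ ≤ max (max t₁ t₂) t₃ := le_max_right _ _
  have h12 : t₁ < t₂ + t₃ := by linarith
  have h21 : t₂ < t₁ + t₃ := by linarith
  have h31 : t₃ < t₁ + t₂ := by linarith
  obtain ⟨β, γ, hβ0, hβπ, hγ0, hγπ, hcβ, hcγ, clR, clI⟩ :=
    exists_angles t₁ t₂ t₃ ht₁ ht₂ ht₃ h12 h21 h31
  obtain ⟨⟨φ₀, h₀⟩, ⟨hmem₀, hh₀, hE₁, hE₂⟩, huniq⟩ := core β γ w₁ w₂ hβ0 hβπ hγ0 hγπ hw₁ hw₂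
  simp only at hmem₀ hh₀ hE₁ hE₂
  have hm1 : φ₀ ∈ Ioo (-π) π := ⟨hmem₀.1, by have := hmem₀.2; linarith⟩
  have hm3 : φ₀ + β ∈ Ioo (-π) π := ⟨by linarith [hmem₀.1], by have := hmem₀.2; linarith⟩
  have hm2 : φ₀ + β + γ ∈ Ioo (-π) π := ⟨by linarith [hmem₀.1], by have := hmem₀.2; linarith⟩
  have sumcos : t₁ * Real.cos φ₀ + t₂ * Real.cos (φ₀+β+γ) + t₃ * Real.cos (φ₀+β) = 0 := by
    have ee2 : Real.cos (φ₀+β+γ) = Real.cos φ₀ * Real.cos (β+γ) - Real.sin φ₀ * Real.sin (β+γ) := by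
      rw [add_assoc]; exact Real.cos_add φ₀ (β+γ)
    rw [ee2, Real.cos_add φ₀ β]
    linear_combination Real.cos φ₀ * clR - Real.sin φ₀ * clI
  have sumsin : t₁ * Real.sin φ₀ + t₂ * Real.sin (φ₀+β+γ) + t₃ * Real.sin (φ₀+β) = 0 := by
    have ee2 : Real.sin (φ₀+β+γ) = Real.sin φ₀ * Real.cos (β+γ) + Real.cos φ₀ * Real.sin (β+γ) := by
      rw [add_assoc]; exact Real.sin_add φ₀ (β+γ)
    rw [ee2, Real.sin_add φ₀ β]
    linear_combination Real.sin φ₀ * clR + Real.cos φ₀ * clI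
  refine ⟨(h₀ * Real.tan (φ₀/2), h₀ * Real.tan ((φ₀+β+γ)/2), h₀ * Real.tan ((φ₀+β)/2), h₀),
    ⟨hh₀, ?_, ?_, ?_, ?_⟩, ?_⟩
  · show t₁ * (h₀^2 - (h₀ * Real.tan (φ₀/2))^2) / (h₀^2 + (h₀ * Real.tan (φ₀/2))^2)
        + t₂ * (h₀^2 - (h₀ * Real.tan ((φ₀+β+γ)/2))^2) / (h₀^2 + (h₀ * Real.tan ((φ₀+β+γ)/2))^2)
        + t₃ * (h₀^2 - (h₀ * Real.tan ((φ₀+β)/2))^2) / (h₀^2 + (h₀ * Real.tan ((φ₀+β)/2))^2) = 0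
    rw [show t₁ * (h₀^2 - (h₀ * Real.tan (φ₀/2))^2) / (h₀^2 + (h₀ * Real.tan (φ₀/2))^2)
        = t₁ * Real.cos φ₀ from by rw [mul_div_assoc, term1 hm1 hh₀]]
    rw [show t₂ * (h₀^2 - (h₀ * Real.tan ((φ₀+β+γ)/2))^2) / (h₀^2 + (h₀ * Real.tan ((φ₀+β+γ)/2))^2)
        = t₂ * Real.cos (φ₀+β+γ) from by rw [mul_div_assoc, term1 hm2 hh₀]]
    rw [show t₃ * (h₀^2 - (h₀ * Real.tan ((φ₀+β)/2))^2) / (h₀^2 + (h₀ * Real.tan ((φ₀+β)/2))^2)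
        = t₃ * Real.cos (φ₀+β) from by rw [mul_div_assoc, term1 hm3 hh₀]]
    exact sumcos
  · show t₁ * (h₀ * Real.tan (φ₀/2)) / (h₀^2 + (h₀ * Real.tan (φ₀/2))^2)
        + t₂ * (h₀ * Real.tan ((φ₀+β+γ)/2)) / (h₀^2 + (h₀ * Real.tan ((φ₀+β+γ)/2))^2)
        + t₃ * (h₀ * Real.tan ((φ₀+β)/2)) / (h₀^2 + (h₀ * Real.tan ((φ₀+β)/2))^2) = 0
    rw [show t₁ * (h₀ * Real.tan (φ₀/2)) / (h₀^2 + (h₀ * Real.tan (φ₀/2))^2)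
        = t₁ * (Real.sin φ₀ / (2*h₀)) from by rw [mul_div_assoc, term2 hm1 hh₀]]
    rw [show t₂ * (h₀ * Real.tan ((φ₀+β+γ)/2)) / (h₀^2 + (h₀ * Real.tan ((φ₀+β+γ)/2))^2)
        = t₂ * (Real.sin (φ₀+β+γ) / (2*h₀)) from by rw [mul_div_assoc, term2 hm2 hh₀]]
    rw [show t₃ * (h₀ * Real.tan ((φ₀+β)/2)) / (h₀^2 + (h₀ * Real.tan ((φ₀+β)/2))^2)
        = t₃ * (Real.sin (φ₀+β) / (2*h₀)) from by rw [mul_div_assoc, term2 hm3 hh₀]]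
    rw [show t₁ * (Real.sin φ₀ / (2*h₀)) + t₂ * (Real.sin (φ₀+β+γ) / (2*h₀))
        + t₃ * (Real.sin (φ₀+β) / (2*h₀))
        = (t₁ * Real.sin φ₀ + t₂ * Real.sin (φ₀+β+γ) + t₃ * Real.sin (φ₀+β)) / (2*h₀) from by ring]
    rw [sumsin, zero_div]
  · show -(h₀ * Real.tan (φ₀/2)) * _ + _ * _ = w₁
    simp only [fV] at hE₁
    linear_combination hE₁
  · show (h₀ * Real.tan ((φ₀+β+γ)/2)) * _ - _ * _ = w₂
    simp only [fV] at hE₂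
    linear_combination hE₂
  rintro ⟨y₁, y₂, y₃, k⟩ ⟨hk, e1, e2, e3, e4⟩
  simp only at hk e1 e2 e3 e4
  have hkne : k ≠ 0 := hk.ne'
  set ψ₁ : ℝ := 2 * Real.arctan (y₁ / k) with hψ₁def
  set ψ₂ : ℝ := 2 * Real.arctan (y₂ / k) with hψ₂def
  set ψ₃ : ℝ := 2 * Real.arctan (y₃ / k) with hψ₃def
  have htan : ∀ y : ℝ, Real.tan ((2 * Real.arctan (y / k))/2) = y / k := by
    intro y
    rw [show (2 * Real.arctan (y / k))/2 = Real.arctan (y/k) by ring, Real.tan_arctan]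
  have hy₁ : y₁ = k * Real.tan (ψ₁/2) := by rw [hψ₁def, htan]; field_simp
  have hy₂ : y₂ = k * Real.tan (ψ₂/2) := by rw [hψ₂def, htan]; field_simp
  have hy₃ : y₃ = k * Real.tan (ψ₃/2) := by rw [hψ₃def, htan]; field_simp
  have hmemψ : ∀ y : ℝ, 2 * Real.arctan (y / k) ∈ Ioo (-π) π := by
    intro y
    constructor
    · linarith [Real.neg_pi_div_two_lt_arctan (y/k)]
    · linarith [Real.arctan_lt_pi_div_two (y/k)]
  have hψ₁m : ψ₁ ∈ Ioo (-π) π := hmemψ y₁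
  have hψ₂m : ψ₂ ∈ Ioo (-π) π := hmemψ y₂
  have hψ₃m : ψ₃ ∈ Ioo (-π) π := hmemψ y₃
  rw [hy₁, hy₂, hy₃] at e1 e2
  rw [hy₁, hy₃] at e3
  rw [hy₂, hy₃] at e4
  rw [show t₁ * (k * Real.tan (ψ₁/2)) / (k^2 + (k * Real.tan (ψ₁/2))^2)
      = t₁ * (Real.sin ψ₁ / (2*k)) from by rw [mul_div_assoc, term2 hψ₁m hk]] at e2
  rw [show t₂ * (k * Real.tan (ψ₂/2)) / (k^2 + (k * Real.tan (ψ₂/2))^2)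
      = t₂ * (Real.sin ψ₂ / (2*k)) from by rw [mul_div_assoc, term2 hψ₂m hk]] at e2
  rw [show t₃ * (k * Real.tan (ψ₃/2)) / (k^2 + (k * Real.tan (ψ₃/2))^2)
      = t₃ * (Real.sin ψ₃ / (2*k)) from by rw [mul_div_assoc, term2 hψ₃m hk]] at e2
  rw [show t₁ * (Real.sin ψ₁ / (2*k)) + t₂ * (Real.sin ψ₂ / (2*k)) + t₃ * (Real.sin ψ₃ / (2*k))
      = (t₁ * Real.sin ψ₁ + t₂ * Real.sin ψ₂ + t₃ * Real.sin ψ₃) / (2*k) from by ring] at e2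
  rw [show t₁ * (k^2 - (k * Real.tan (ψ₁/2))^2) / (k^2 + (k * Real.tan (ψ₁/2))^2)
      = t₁ * Real.cos ψ₁ from by rw [mul_div_assoc, term1 hψ₁m hk]] at e1
  rw [show t₂ * (k^2 - (k * Real.tan (ψ₂/2))^2) / (k^2 + (k * Real.tan (ψ₂/2))^2)
      = t₂ * Real.cos ψ₂ from by rw [mul_div_assoc, term1 hψ₂m hk]] at e1
  rw [show t₃ * (k^2 - (k * Real.tan (ψ₃/2))^2) / (k^2 + (k * Real.tan (ψ₃/2))^2)
      = t₃ * Real.cos ψ₃ from by rw [mul_div_assoc, term1 hψ₃m hk]] at e1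
  have E1 : t₁ * Real.cos ψ₁ + t₂ * Real.cos ψ₂ + t₃ * Real.cos ψ₃ = 0 := e1
  have E2 : t₁ * Real.sin ψ₁ + t₂ * Real.sin ψ₂ + t₃ * Real.sin ψ₃ = 0 := by
    rcases div_eq_zero_iff.mp e2 with h | h
    · exact h
    · exact absurd h (by positivity)
  have E3 : k^3 * (fV ψ₃ - fV ψ₁) = w₁ := by
    simp only [fV]; linear_combination e3
  have E4 : k^3 * (fV ψ₂ - fV ψ₃) = w₂ := by
    simp only [fV]; linear_combination e4
  have hk3 : (0:ℝ) < k^3 := pow_pos hk 3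
  have h13 : fV ψ₁ < fV ψ₃ := by
    by_contra hcon
    push_neg at hcon
    have : k^3 * (fV ψ₃ - fV ψ₁) ≤ 0 :=
      mul_nonpos_of_nonneg_of_nonpos hk3.le (by linarith)
    linarith
  have h32 : fV ψ₃ < fV ψ₂ := by
    by_contra hcon
    push_neg at hcon
    have : k^3 * (fV ψ₂ - fV ψ₃) ≤ 0 :=
      mul_nonpos_of_nonneg_of_nonpos hk3.le (by linarith)
    linarith
  have hlt13 : ψ₁ < ψ₃ := by
    by_contra hcon
    push_neg at hcon
    rcases eq_or_lt_of_le hcon with he | hlt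
    · rw [he] at h13; exact lt_irrefl _ h13
    · have := fV_strictMonoOn hψ₃m hψ₁m hlt; linarith
  have hlt32 : ψ₃ < ψ₂ := by
    by_contra hcon
    push_neg at hcon
    rcases eq_or_lt_of_le hcon with he | hlt
    · rw [he] at h32; exact lt_irrefl _ h32
    · have := fV_strictMonoOn hψ₂m hψ₃m hlt; linarith
  have R1 : t₁ + t₃ * Real.cos (ψ₃ - ψ₁) + t₂ * Real.cos (ψ₂ - ψ₁) = 0 := by
    rw [Real.cos_sub, Real.cos_sub]
    linear_combination Real.cos ψ₁ * E1 + Real.sin ψ₁ * E2 - t₁ * Real.sin_sq_add_cos_sq ψ₁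
  have I1 : t₃ * Real.sin (ψ₃ - ψ₁) + t₂ * Real.sin (ψ₂ - ψ₁) = 0 := by
    rw [Real.sin_sub, Real.sin_sub]
    linear_combination Real.cos ψ₁ * E2 - Real.sin ψ₁ * E1
  have R2 : t₂ + t₁ * Real.cos (ψ₂ - ψ₁) + t₃ * Real.cos (ψ₂ - ψ₃) = 0 := by
    rw [Real.cos_sub, Real.cos_sub]
    linear_combination Real.cos ψ₂ * E1 + Real.sin ψ₂ * E2 - t₂ * Real.sin_sq_add_cos_sq ψ₂
  have I2 : t₁ * Real.sin (ψ₂ - ψ₁) + t₃ * Real.sin (ψ₂ - ψ₃) = 0 := by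
    rw [Real.sin_sub, Real.sin_sub]
    linear_combination Real.sin ψ₂ * E1 - Real.cos ψ₂ * E2
  have h13pos : (0:ℝ) < 2*t₁*t₃ := by positivity
  have h23pos : (0:ℝ) < 2*t₂*t₃ := by positivity
  have hcosδ : Real.cos (ψ₃ - ψ₁) = Real.cos β := by
    rw [hcβ, eq_div_iff h13pos.ne']
    have q1 : (t₂ * Real.cos (ψ₂-ψ₁))^2 = (t₁ + t₃*Real.cos (ψ₃-ψ₁))^2 := by
      linear_combination (t₂*Real.cos (ψ₂-ψ₁) - t₁ - t₃*Real.cos (ψ₃-ψ₁)) * R1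
    have q2 : (t₂ * Real.sin (ψ₂-ψ₁))^2 = (t₃*Real.sin (ψ₃-ψ₁))^2 := by
      linear_combination (t₂*Real.sin (ψ₂-ψ₁) - t₃*Real.sin (ψ₃-ψ₁)) * I1
    linear_combination -q1 - q2 + t₂^2 * Real.sin_sq_add_cos_sq (ψ₂-ψ₁)
      - t₃^2 * Real.sin_sq_add_cos_sq (ψ₃-ψ₁)
  have hcosε : Real.cos (ψ₂ - ψ₃) = Real.cos γ := by
    rw [hcγ, eq_div_iff h23pos.ne']
    have q1 : (t₁ * Real.cos (ψ₂-ψ₁))^2 = (t₂ + t₃*Real.cos (ψ₂-ψ₃))^2 := by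
      linear_combination (t₁*Real.cos (ψ₂-ψ₁) - t₂ - t₃*Real.cos (ψ₂-ψ₃)) * R2
    have q2 : (t₁ * Real.sin (ψ₂-ψ₁))^2 = (t₃*Real.sin (ψ₂-ψ₃))^2 := by
      linear_combination (t₁*Real.sin (ψ₂-ψ₁) - t₃*Real.sin (ψ₂-ψ₃)) * I2
    linear_combination -q1 - q2 + t₁^2 * Real.sin_sq_add_cos_sq (ψ₂-ψ₁)
      - t₃^2 * Real.sin_sq_add_cos_sq (ψ₂-ψ₃)
  have hsinβ : 0 < Real.sin β := Real.sin_pos_of_pos_of_lt_pi hβ0 hβπ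
  have hsinγ : 0 < Real.sin γ := Real.sin_pos_of_pos_of_lt_pi hγ0 hγπ
  have hC : Real.cos (ψ₂-ψ₁) =
      Real.cos (ψ₃-ψ₁) * Real.cos (ψ₂-ψ₃) - Real.sin (ψ₃-ψ₁) * Real.sin (ψ₂-ψ₃) := by
    rw [show ψ₂-ψ₁ = (ψ₃-ψ₁) + (ψ₂-ψ₃) by ring]
    exact Real.cos_add _ _
  have clR' : t₁ + t₃ * Real.cos β + t₂ * (Real.cos β * Real.cos γ - Real.sin β * Real.sin γ) = 0 := by
    rw [← Real.cos_add]; exact clR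
  have hδcase := cos_rigid (by linarith : 0 < ψ₃ - ψ₁)
    (by linarith [hψ₃m.2, hψ₁m.1] : ψ₃ - ψ₁ < 2*π) hβ0 hβπ hcosδ
  have hεcase := cos_rigid (by linarith : 0 < ψ₂ - ψ₃)
    (by linarith [hψ₂m.2, hψ₃m.1] : ψ₂ - ψ₃ < 2*π) hγ0 hγπ hcosε
  have hδε2π : ψ₂ - ψ₁ < 2*π := by linarith [hψ₂m.2, hψ₁m.1]
  have hmain : ψ₃ - ψ₁ = β ∧ ψ₂ - ψ₃ = γ := by
    rcases hδcase with hδ | hδ <;> rcases hεcase with hε | hε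
    · exact ⟨hδ, hε⟩
    · exfalso
      rw [hC, hcosδ, hcosε, hδ, hε, Real.sin_two_pi_sub] at R1
      have key : t₂ * (Real.sin β * Real.sin γ) = 0 := by linear_combination (R1 - clR') / 2
      exact absurd key (mul_pos ht₂ (mul_pos hsinβ hsinγ)).ne'
    · exfalso
      rw [hC, hcosδ, hcosε, hδ, hε, Real.sin_two_pi_sub] at R1
      have key : t₂ * (Real.sin β * Real.sin γ) = 0 := by linear_combination (R1 - clR') / 2
      exact absurd key (mul_pos ht₂ (mul_pos hsinβ hsinγ)).ne'
    · exfalso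
      linarith [hδ, hε]
  obtain ⟨hδ, hε⟩ := hmain
  have hψ₃eq : ψ₃ = ψ₁ + β := by linarith
  have hψ₂eq : ψ₂ = ψ₁ + β + γ := by linarith
  have hφI : ψ₁ ∈ Ioo (-π) (π - β - γ) := ⟨hψ₁m.1, by linarith [hψ₂m.2]⟩
  have hq := huniq (ψ₁, k) ⟨hφI, hk, by rw [← hψ₃eq]; exact E3,
    by rw [← hψ₂eq, ← hψ₃eq]; exact E4⟩
  rw [Prod.ext_iff] at hq
  simp only at hq
  obtain ⟨hψφ, hkh⟩ := hq
  have hy₁' : y₁ = h₀ * Real.tan (φ₀/2) := by rw [hy₁, hψφ, hkh]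
  have hy₂' : y₂ = h₀ * Real.tan ((φ₀+β+γ)/2) := by rw [hy₂, hkh, hψ₂eq, hψφ]
  have hy₃' : y₃ = h₀ * Real.tan ((φ₀+β)/2) := by rw [hy₃, hkh, hψ₃eq, hψφ]
  simp only [Prod.mk.injEq]
  exact ⟨hy₁', hy₂', hy₃', hkh⟩
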